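/- Let L ∈ ℝ^{c×c} be partitioned as L = [[L11, L12],[L21, L22]] with L11 ∈ ℝ^{ĉ×ĉ}, 0 < ĉ < c, and L22 invertible; let P := [I_ĉ, −L12 L22⁻¹] and L̂ := L11 − L12 L22⁻¹ L21. Let Z = [Z1, Z2] ∈ ℝ^{m×c} be partitioned compatibly (Z1 ∈ ℝ^{m×ĉ}), set Ẑ := Z1, and let x ∈ ℝ^m have all entries strictly positive and v_b ∈ ℝ^c. Then Ẑ ( P v_b − L̂ · Exp(Ẑ^T Ln(x)) ) = Ẑ P ( v_b − L · Exp(Z^T Ln(x)) ). -/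

import Mathlib

open scoped Matrix

/-- Equality of the two expressions for the reduced network dynamics in
equation (6) of the paper:
`Ẑ (P v_b - L̂ Exp(Ẑᵀ Ln x)) = Ẑ P (v_b - L Exp(Zᵀ Ln x))`. -/
theorem reduced_dynamics_two_forms
    (m c_hat d : ℕ) (hm : 0 < m) (hchat : 0 < c_hat) (hd : 0 < d)
    (L11 : Matrix (Fin c_hat) (Fin c_hat) ℝ) (L12 : Matrix (Fin c_hat) (Fin d) ℝ)
    (L21 : Matrix (Fin d) (Fin c_hat) ℝ) (L22 : Matrix (Fin d) (Fin d) ℝ)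
    (hL22 : IsUnit L22.det)
    (Z1 : Matrix (Fin m) (Fin c_hat) ℝ) (Z2 : Matrix (Fin m) (Fin d) ℝ)
    (x : Fin m → ℝ) (hx : ∀ i, 0 < x i)
    (v_b : Fin c_hat ⊕ Fin d → ℝ) :
    Z1.mulVec
        ((Matrix.fromCols (1 : Matrix (Fin c_hat) (Fin c_hat) ℝ)
            (-(L12 * L22⁻¹))).mulVec v_b -
          (L11 - L12 * L22⁻¹ * L21).mulVec
            (fun j => Real.exp ((Z1ᵀ).mulVec (fun i => Real.log (x i)) j))) =
      (Z1 * Matrix.fromCols (1 : Matrix (Fin c_hat) (Fin c_hat) ℝ)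
          (-(L12 * L22⁻¹))).mulVec
        (v_b - (Matrix.fromBlocks L11 L12 L21 L22).mulVec
          (fun j => Real.exp (((Matrix.fromCols Z1 Z2)ᵀ).mulVec
            (fun i => Real.log (x i)) j))) := by
  set u : Fin m → ℝ := fun i => Real.log (x i) with hu
  set w1 : Fin c_hat → ℝ := fun j => Real.exp ((Z1ᵀ).mulVec u j) with hw1
  set w2 : Fin d → ℝ := fun j => Real.exp ((Z2ᵀ).mulVec u j) with hw2
  have hsum : (fun j => Real.exp (((Matrix.fromCols Z1 Z2)ᵀ).mulVec u j))
      = Sum.elim w1 w2 := by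
    funext j
    cases j with
    | inl j => simp [Matrix.transpose_fromCols, Matrix.fromRows_mulVec, hw1]
    | inr j => simp [Matrix.transpose_fromCols, Matrix.fromRows_mulVec, hw2]
  have hP : ∀ (a : Fin c_hat → ℝ) (b : Fin d → ℝ),
      (Matrix.fromCols (1 : Matrix (Fin c_hat) (Fin c_hat) ℝ)
        (-(L12 * L22⁻¹))).mulVec (Sum.elim a b) = a - (L12 * L22⁻¹) *ᵥ b := by
    intro a b
    rw [Matrix.fromCols_mulVec_sumElim, Matrix.one_mulVec, Matrix.neg_mulVec,
      sub_eq_add_neg]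
  have key : (Matrix.fromCols (1 : Matrix (Fin c_hat) (Fin c_hat) ℝ)
        (-(L12 * L22⁻¹))).mulVec
        (v_b - (Matrix.fromBlocks L11 L12 L21 L22).mulVec (Sum.elim w1 w2)) =
      (Matrix.fromCols (1 : Matrix (Fin c_hat) (Fin c_hat) ℝ)
        (-(L12 * L22⁻¹))).mulVec v_b - (L11 - L12 * L22⁻¹ * L21).mulVec w1 := by
    rw [Matrix.mulVec_sub, Matrix.fromBlocks_mulVec]
    simp only [Sum.elim_comp_inl, Sum.elim_comp_inr]
    rw [hP, Matrix.mulVec_add, Matrix.mulVec_mulVec, Matrix.mulVec_mulVec,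
      Matrix.nonsing_inv_mul_cancel_right _ _ hL22, Matrix.sub_mulVec]
    abel
  rw [hsum, ← Matrix.mulVec_mulVec, key]
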